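/- In a bar category, the coboundary natural isomorphism Ξ satisfies the cocycle identity: Φ_{X,Y,Z} ∘ (Ξ_{X,Y} ⊗ id) ∘ Ξ_{X⊗Y,Z} = (id ⊗ Ξ_{Y,Z}) ∘ Ξ_{X,Y⊗Z} ∘ Φ_{X,Y,Z}, and moreover Ξ_{X,1} = id and Ξ_{1,X} = id. -/

import Mathlib

open CategoryTheory MonoidalCategory

universe v u

/-- A bar category: a monoidal category `C` with a functor `bar : C ⥤ C`, a natural
equivalence `bb` between the identity and `bar ∘ bar`, an invertible morphism
`⋆ : 𝟙_ C ≅ bar (𝟙_ C)`, and a natural equivalence `Υ : bar (X ⊗ Y) ≅ bar Y ⊗ bar X`,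
satisfying axioms a) (compatibility with the unit isomorphisms, where `l : X ≅ X ⊗ 𝟙_` and
`r : X ≅ 𝟙_ ⊗ X` in the paper's conventions), b) (compatibility with the associator),
c) `⋆̄ ∘ ⋆ = bb_{𝟙_}` and d) `(bb_X)‾ = bb_{X̄}`. -/
structure BarCategoryStruct (C : Type u) [Category.{v} C] [MonoidalCategory C] where
  bar : C ⥤ C
  bb : 𝟭 C ≅ bar ⋙ bar
  star : 𝟙_ C ≅ bar.obj (𝟙_ C)
  Upsilon : ∀ X Y : C, bar.obj (X ⊗ Y) ≅ bar.obj Y ⊗ bar.obj X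
  upsilon_natural : ∀ {X Y X' Y' : C} (θ : X ⟶ X') (φ : Y ⟶ Y'),
    bar.map (θ ⊗ₘ φ) ≫ (Upsilon X' Y').hom =
      (Upsilon X Y).hom ≫ (bar.map φ ⊗ₘ bar.map θ)
  axiom_a1 : ∀ X : C,
    bar.map (ρ_ X).inv ≫ (Upsilon X (𝟙_ C)).hom ≫ (star.inv ⊗ₘ 𝟙 (bar.obj X)) =
      (λ_ (bar.obj X)).inv
  axiom_a2 : ∀ X : C,
    bar.map (λ_ X).inv ≫ (Upsilon (𝟙_ C) X).hom ≫ (𝟙 (bar.obj X) ⊗ₘ star.inv) =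
      (ρ_ (bar.obj X)).inv
  axiom_b : ∀ X Y Z : C,
    bar.map (α_ X Y Z).hom ≫ (Upsilon X (Y ⊗ Z)).hom ≫
        ((Upsilon Y Z).hom ⊗ₘ 𝟙 (bar.obj X)) ≫
        (α_ (bar.obj Z) (bar.obj Y) (bar.obj X)).hom =
      (Upsilon (X ⊗ Y) Z).hom ≫ (𝟙 (bar.obj Z) ⊗ₘ (Upsilon X Y).hom)
  axiom_c : star.hom ≫ bar.map star.hom = bb.hom.app (𝟙_ C)
  axiom_d : ∀ X : C, bar.map (bb.hom.app X) = bb.hom.app (bar.obj X)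

variable {C : Type u} [Category.{v} C] [MonoidalCategory C]

/-- The coboundary natural isomorphism `Ξ_{X,Y} : X ⊗ Y ⟶ X ⊗ Y` of a bar category, defined
by `(bb_X ⊗ bb_Y) ∘ Ξ_{X,Y} = Υ_{Ȳ,X̄} ∘ (Υ_{X,Y})‾ ∘ bb_{X⊗Y}`. -/
def BarCategoryStruct.Xi (B : BarCategoryStruct C) (X Y : C) : X ⊗ Y ⟶ X ⊗ Y :=
  B.bb.hom.app (X ⊗ Y) ≫ B.bar.map (B.Upsilon X Y).hom ≫
    (B.Upsilon (B.bar.obj Y) (B.bar.obj X)).hom ≫ (B.bb.inv.app X ⊗ₘ B.bb.inv.app Y)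

namespace BarCategoryStruct
variable (B : BarCategoryStruct C)

lemma Upsilon_unit_right (X : C) :
    (B.Upsilon X (𝟙_ C)).hom =
      B.bar.map (ρ_ X).hom ≫ (λ_ (B.bar.obj X)).inv ≫ (B.star.hom ⊗ₘ 𝟙 (B.bar.obj X)) := by
  have h2 : (B.Upsilon X (𝟙_ C)).hom ≫ (B.star.inv ⊗ₘ 𝟙 (B.bar.obj X)) =
      B.bar.map (ρ_ X).hom ≫ (λ_ (B.bar.obj X)).inv := by
    rw [← B.axiom_a1 X, ← Category.assoc, ← B.bar.map_comp, Iso.hom_inv_id, B.bar.map_id,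
      Category.id_comp]
  calc (B.Upsilon X (𝟙_ C)).hom
      = ((B.Upsilon X (𝟙_ C)).hom ≫ (B.star.inv ⊗ₘ 𝟙 (B.bar.obj X))) ≫
          (B.star.hom ⊗ₘ 𝟙 (B.bar.obj X)) := by
        rw [Category.assoc, tensorHom_comp_tensorHom, Iso.inv_hom_id, Category.id_comp, id_tensorHom_id,
          Category.comp_id]
    _ = _ := by rw [h2, Category.assoc]

lemma Upsilon_unit_left (X : C) :
    (B.Upsilon (𝟙_ C) X).hom =
      B.bar.map (λ_ X).hom ≫ (ρ_ (B.bar.obj X)).inv ≫ (𝟙 (B.bar.obj X) ⊗ₘ B.star.hom) := by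
  have h2 : (B.Upsilon (𝟙_ C) X).hom ≫ (𝟙 (B.bar.obj X) ⊗ₘ B.star.inv) =
      B.bar.map (λ_ X).hom ≫ (ρ_ (B.bar.obj X)).inv := by
    rw [← B.axiom_a2 X, ← Category.assoc, ← B.bar.map_comp, Iso.hom_inv_id, B.bar.map_id,
      Category.id_comp]
  calc (B.Upsilon (𝟙_ C) X).hom
      = ((B.Upsilon (𝟙_ C) X).hom ≫ (𝟙 (B.bar.obj X) ⊗ₘ B.star.inv)) ≫
          (𝟙 (B.bar.obj X) ⊗ₘ B.star.hom) := by
        rw [Category.assoc, tensorHom_comp_tensorHom, Iso.inv_hom_id, Category.id_comp, id_tensorHom_id,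
          Category.comp_id]
    _ = _ := by rw [h2, Category.assoc]

end BarCategoryStruct

namespace BarCategoryStruct
variable (B : BarCategoryStruct C)

lemma Xi_unit_right (X : C) : B.Xi X (𝟙_ C) = 𝟙 (X ⊗ 𝟙_ C) := by
  have nat : B.bar.map (B.star.hom ⊗ₘ 𝟙 (B.bar.obj X)) ≫
        (B.Upsilon (B.bar.obj (𝟙_ C)) (B.bar.obj X)).hom
      = (B.Upsilon (𝟙_ C) (B.bar.obj X)).hom ≫
        (B.bar.map (𝟙 (B.bar.obj X)) ⊗ₘ B.bar.map B.star.hom) :=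
    B.upsilon_natural B.star.hom (𝟙 (B.bar.obj X))
  have bbnat : B.bb.hom.app (X ⊗ 𝟙_ C) ≫ B.bar.map (B.bar.map (ρ_ X).hom)
      = (ρ_ X).hom ≫ B.bb.hom.app X := by
    have := B.bb.hom.naturality (ρ_ X).hom
    simpa using this.symm
  rw [Xi, B.Upsilon_unit_right X, B.bar.map_comp, B.bar.map_comp]
  slice_lhs 4 5 => rw [nat]
  rw [B.Upsilon_unit_left (B.bar.obj X), B.bar.map_id]
  -- merge the two middle bar.map's
  slice_lhs 3 4 => rw [← B.bar.map_comp, Iso.inv_hom_id, B.bar.map_id]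
  simp only [Category.id_comp, Category.assoc]
  -- now: bb ≫ mmρ ≫ ρ⁻¹ ≫ (𝟙⊗star) ≫ (𝟙⊗mstar) ≫ (bbi⊗bbi)
  slice_lhs 4 6 => rw [tensorHom_comp_tensorHom, tensorHom_comp_tensorHom, Category.id_comp, Category.id_comp,
    ← Category.assoc, B.axiom_c, Iso.hom_inv_id_app]
  slice_lhs 1 2 => rw [bbnat]
  slice_lhs 2 3 => rw [rightUnitor_inv_naturality]
  simp

lemma Xi_unit_left (X : C) : B.Xi (𝟙_ C) X = 𝟙 (𝟙_ C ⊗ X) := by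
  have nat : B.bar.map (𝟙 (B.bar.obj X) ⊗ₘ B.star.hom) ≫
        (B.Upsilon (B.bar.obj X) (B.bar.obj (𝟙_ C))).hom
      = (B.Upsilon (B.bar.obj X) (𝟙_ C)).hom ≫
        (B.bar.map B.star.hom ⊗ₘ B.bar.map (𝟙 (B.bar.obj X))) :=
    B.upsilon_natural (𝟙 (B.bar.obj X)) B.star.hom
  have bbnat : B.bb.hom.app (𝟙_ C ⊗ X) ≫ B.bar.map (B.bar.map (λ_ X).hom)
      = (λ_ X).hom ≫ B.bb.hom.app X := by
    have := B.bb.hom.naturality (λ_ X).hom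
    simpa using this.symm
  rw [Xi, B.Upsilon_unit_left X, B.bar.map_comp, B.bar.map_comp]
  slice_lhs 4 5 => rw [nat]
  rw [B.Upsilon_unit_right (B.bar.obj X), B.bar.map_id]
  slice_lhs 3 4 => rw [← B.bar.map_comp, Iso.inv_hom_id, B.bar.map_id]
  simp only [Category.id_comp, Category.assoc]
  slice_lhs 4 6 => rw [tensorHom_comp_tensorHom, tensorHom_comp_tensorHom, Category.id_comp, Category.id_comp,
    ← Category.assoc, B.axiom_c, Iso.hom_inv_id_app]
  slice_lhs 1 2 => rw [bbnat]
  slice_lhs 2 3 => rw [leftUnitor_inv_naturality]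
  simp

end BarCategoryStruct

namespace BarCategoryStruct
variable (B : BarCategoryStruct C)

set_option maxHeartbeats 2000000 in
lemma Xi_assoc (X Y Z : C) :
    B.Xi (X ⊗ Y) Z ≫ (B.Xi X Y ⊗ₘ 𝟙 Z) ≫ (α_ X Y Z).hom =
      (α_ X Y Z).hom ≫ B.Xi X (Y ⊗ Z) ≫ (𝟙 X ⊗ₘ B.Xi Y Z) := by
  have split : (B.bar.map (B.Upsilon X Y).hom ≫ (B.Upsilon (B.bar.obj Y) (B.bar.obj X)).hom ≫
        (B.bb.inv.app X ⊗ₘ B.bb.inv.app Y)) ⊗ₘ B.bb.inv.app Z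
      = (B.bar.map (B.Upsilon X Y).hom ⊗ₘ 𝟙 (B.bar.obj (B.bar.obj Z))) ≫
        ((B.Upsilon (B.bar.obj Y) (B.bar.obj X)).hom ⊗ₘ 𝟙 (B.bar.obj (B.bar.obj Z))) ≫
        ((B.bb.inv.app X ⊗ₘ B.bb.inv.app Y) ⊗ₘ B.bb.inv.app Z) := by
    rw [tensorHom_comp_tensorHom, tensorHom_comp_tensorHom, Category.id_comp, Category.id_comp]
  have hnat1 : (B.Upsilon (B.bar.obj Z) (B.bar.obj (X ⊗ Y))).hom ≫
        (B.bar.map (B.Upsilon X Y).hom ⊗ₘ 𝟙 (B.bar.obj (B.bar.obj Z)))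
      = B.bar.map (𝟙 (B.bar.obj Z) ⊗ₘ (B.Upsilon X Y).hom) ≫
        (B.Upsilon (B.bar.obj Z) (B.bar.obj Y ⊗ B.bar.obj X)).hom := by
    have h := B.upsilon_natural (𝟙 (B.bar.obj Z)) (B.Upsilon X Y).hom
    simp only [B.bar.map_id] at h
    exact h.symm
  have hnat2 : B.bar.map ((B.Upsilon Y Z).hom ⊗ₘ 𝟙 (B.bar.obj X)) ≫
        (B.Upsilon (B.bar.obj Z ⊗ B.bar.obj Y) (B.bar.obj X)).hom
      = (B.Upsilon (B.bar.obj (Y ⊗ Z)) (B.bar.obj X)).hom ≫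
        (𝟙 (B.bar.obj (B.bar.obj X)) ⊗ₘ B.bar.map (B.Upsilon Y Z).hom) := by
    have h := B.upsilon_natural (B.Upsilon Y Z).hom (𝟙 (B.bar.obj X))
    simp only [B.bar.map_id] at h
    exact h
  have hb2 : B.bar.map (α_ (B.bar.obj Z) (B.bar.obj Y) (B.bar.obj X)).hom ≫
        (B.Upsilon (B.bar.obj Z) (B.bar.obj Y ⊗ B.bar.obj X)).hom ≫
        ((B.Upsilon (B.bar.obj Y) (B.bar.obj X)).hom ⊗ₘ 𝟙 (B.bar.obj (B.bar.obj Z)))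
      = (B.Upsilon (B.bar.obj Z ⊗ B.bar.obj Y) (B.bar.obj X)).hom ≫
        (𝟙 (B.bar.obj (B.bar.obj X)) ⊗ₘ (B.Upsilon (B.bar.obj Z) (B.bar.obj Y)).hom) ≫
        (α_ (B.bar.obj (B.bar.obj X)) (B.bar.obj (B.bar.obj Y))
          (B.bar.obj (B.bar.obj Z))).inv := by
    rw [← cancel_mono (α_ (B.bar.obj (B.bar.obj X)) (B.bar.obj (B.bar.obj Y))
      (B.bar.obj (B.bar.obj Z))).hom]
    simpa using B.axiom_b (B.bar.obj Z) (B.bar.obj Y) (B.bar.obj X)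
  have hα : (α_ (B.bar.obj (B.bar.obj X)) (B.bar.obj (B.bar.obj Y))
        (B.bar.obj (B.bar.obj Z))).inv ≫
        ((B.bb.inv.app X ⊗ₘ B.bb.inv.app Y) ⊗ₘ B.bb.inv.app Z) ≫ (α_ X Y Z).hom
      = B.bb.inv.app X ⊗ₘ (B.bb.inv.app Y ⊗ₘ B.bb.inv.app Z) := by
    rw [← associator_inv_naturality_assoc]
    simp
  have hbb : B.bb.hom.app ((X ⊗ Y) ⊗ Z) ≫ B.bar.map (B.bar.map (α_ X Y Z).hom)
      = (α_ X Y Z).hom ≫ B.bb.hom.app (X ⊗ (Y ⊗ Z)) := by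
    have h := B.bb.hom.naturality (α_ X Y Z).hom
    simpa using h.symm
  have S1 : (B.bb.inv.app (X ⊗ Y) ⊗ₘ B.bb.inv.app Z) ≫
        ((B.bb.hom.app (X ⊗ Y) ≫ B.bar.map (B.Upsilon X Y).hom ≫
          (B.Upsilon (B.bar.obj Y) (B.bar.obj X)).hom ≫ (B.bb.inv.app X ⊗ₘ B.bb.inv.app Y)) ⊗ₘ
          𝟙 Z) ≫ (α_ X Y Z).hom
      = (B.bar.map (B.Upsilon X Y).hom ⊗ₘ 𝟙 (B.bar.obj (B.bar.obj Z))) ≫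
        ((B.Upsilon (B.bar.obj Y) (B.bar.obj X)).hom ⊗ₘ 𝟙 (B.bar.obj (B.bar.obj Z))) ≫
        ((B.bb.inv.app X ⊗ₘ B.bb.inv.app Y) ⊗ₘ B.bb.inv.app Z) ≫ (α_ X Y Z).hom := by
    conv_lhs => rw [← Category.assoc, tensorHom_comp_tensorHom]
    conv_rhs => rw [← Category.assoc, tensorHom_comp_tensorHom]
    simp only [Functor.id_obj, Functor.comp_obj, Category.id_comp, Category.comp_id,
      Iso.inv_hom_id_app_assoc, Category.assoc]
    conv_rhs => rw [← Category.assoc, tensorHom_comp_tensorHom]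
    simp only [Functor.id_obj, Functor.comp_obj, Category.id_comp, Category.comp_id,
      Category.assoc]
  have S8 : (B.bb.inv.app X ⊗ₘ B.bb.inv.app (Y ⊗ Z)) ≫
        (𝟙 X ⊗ₘ (B.bb.hom.app (Y ⊗ Z) ≫ B.bar.map (B.Upsilon Y Z).hom ≫
          (B.Upsilon (B.bar.obj Z) (B.bar.obj Y)).hom ≫ (B.bb.inv.app Y ⊗ₘ B.bb.inv.app Z)))
      = (𝟙 (B.bar.obj (B.bar.obj X)) ⊗ₘ B.bar.map (B.Upsilon Y Z).hom) ≫
        (𝟙 (B.bar.obj (B.bar.obj X)) ⊗ₘ (B.Upsilon (B.bar.obj Z) (B.bar.obj Y)).hom) ≫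
        (B.bb.inv.app X ⊗ₘ (B.bb.inv.app Y ⊗ₘ B.bb.inv.app Z)) := by
    conv_lhs => rw [tensorHom_comp_tensorHom]
    conv_rhs => rw [← Category.assoc, tensorHom_comp_tensorHom]
    simp only [Functor.id_obj, Functor.comp_obj, Category.id_comp, Category.comp_id,
      Iso.inv_hom_id_app_assoc, Category.assoc]
    conv_rhs => rw [tensorHom_comp_tensorHom]
    simp only [Functor.id_obj, Functor.comp_obj, Category.id_comp, Category.comp_id,
      Category.assoc]
  have hmap : B.bar.map (B.Upsilon (X ⊗ Y) Z).hom ≫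
        B.bar.map (𝟙 (B.bar.obj Z) ⊗ₘ (B.Upsilon X Y).hom)
      = B.bar.map (B.bar.map (α_ X Y Z).hom) ≫ B.bar.map (B.Upsilon X (Y ⊗ Z)).hom ≫
        B.bar.map ((B.Upsilon Y Z).hom ⊗ₘ 𝟙 (B.bar.obj X)) ≫
        B.bar.map (α_ (B.bar.obj Z) (B.bar.obj Y) (B.bar.obj X)).hom := by
    rw [← B.bar.map_comp, ← B.axiom_b X Y Z]
    simp [B.bar.map_comp]
  simp only [Functor.id_obj, Functor.comp_obj] at S1 S8 hmap hnat1 hnat2 hb2 hα hbb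
  simp only [Xi, Functor.id_obj, Functor.comp_obj, Category.assoc]
  rw [S1]
  rw [reassoc_of% hnat1]
  rw [reassoc_of% hmap]
  rw [reassoc_of% hb2]
  rw [reassoc_of% hnat2]
  rw [hα]
  rw [reassoc_of% hbb]
  rw [S8]

end BarCategoryStruct

/-- In a bar category, the coboundary `Ξ` is a cocycle:
`Φ_{X,Y,Z} ∘ (Ξ_{X,Y} ⊗ id) ∘ Ξ_{X⊗Y,Z} = (id ⊗ Ξ_{Y,Z}) ∘ Ξ_{X,Y⊗Z} ∘ Φ_{X,Y,Z}`, and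
moreover `Ξ_{X,𝟙} = id` and `Ξ_{𝟙,X} = id`. -/
theorem BarCategoryStruct.Xi_cocycle (B : BarCategoryStruct C) (X Y Z : C) :
    (B.Xi (X ⊗ Y) Z ≫ (B.Xi X Y ⊗ₘ 𝟙 Z) ≫ (α_ X Y Z).hom =
      (α_ X Y Z).hom ≫ B.Xi X (Y ⊗ Z) ≫ (𝟙 X ⊗ₘ B.Xi Y Z)) ∧
    B.Xi X (𝟙_ C) = 𝟙 (X ⊗ 𝟙_ C) ∧ B.Xi (𝟙_ C) X = 𝟙 (𝟙_ C ⊗ X) := by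
  exact ⟨B.Xi_assoc X Y Z, B.Xi_unit_right X, B.Xi_unit_left X⟩
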